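/- The Lebesgue integral I : L¹([0,1]; ℝ) → ℝ, I(f) = ∫_{[0,1]} f(x) dx, is the unique continuous linear functional on L¹([0,1]; ℝ) satisfying I(1_{[0,1]}) = 1 and I(γ(f, g)) = (I(f) + I(g))/2 for all f, g ∈ L¹([0,1]; ℝ), where 1_{[0,1]} denotes the constant function 1. -/

import Mathlib

open MeasureTheory

/-- Lebesgue measure restricted to `[0,1]`. -/
noncomputable def unitMeasure : Measure ℝ := volume.restrict (Set.Icc (0:ℝ) 1)

/-- The juxtaposition `γ(f,g)(x) = f(2x)` for `x < 1/2`, `g(2x − 1)` for `x ≥ 1/2`. -/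
noncomputable def gammaFun {E : Type*} (f g : ℝ → E) (x : ℝ) : E :=
  if x < 1/2 then f (2 * x) else g (2 * x - 1)

open Set Filter Topology ENNReal
open scoped ENNReal

instance : IsFiniteMeasure unitMeasure := by
  constructor
  rw [unitMeasure, Measure.restrict_apply_univ, Real.volume_Icc]
  simp

lemma unitMeasure_apply (s : Set ℝ) : unitMeasure s = volume (s ∩ Icc (0:ℝ) 1) :=
  Measure.restrict_apply' measurableSet_Icc

/-- To prove a `unitMeasure`-a.e. statement it suffices to cover the bad set intersected
with `[0,1]` by a volume-null set. -/
lemma unitMeasure_null {s t : Set ℝ} (hsub : s ∩ Icc (0:ℝ) 1 ⊆ t) (ht : volume t = 0) :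
    unitMeasure s = 0 := by
  rw [unitMeasure_apply]
  exact le_antisymm (ht ▸ measure_mono hsub) zero_le

lemma gammaFun_congr {f f' g g' : ℝ → ℝ} (hf : f =ᵐ[unitMeasure] f')
    (hg : g =ᵐ[unitMeasure] g') :
    gammaFun f g =ᵐ[unitMeasure] gammaFun f' g' := by
  have hNf : volume ({x | f x ≠ f' x} ∩ Icc (0:ℝ) 1) = 0 := by
    have := hf; rw [Filter.EventuallyEq, ae_iff] at this
    simpa [unitMeasure_apply] using this
  have hNg : volume ({x | g x ≠ g' x} ∩ Icc (0:ℝ) 1) = 0 := by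
    have := hg; rw [Filter.EventuallyEq, ae_iff] at this
    simpa [unitMeasure_apply] using this
  rw [Filter.EventuallyEq, ae_iff]
  refine unitMeasure_null (t := (fun x => 2*x) ⁻¹' ({x | f x ≠ f' x} ∩ Icc (0:ℝ) 1) ∪
      (fun x => 2*x - 1) ⁻¹' ({x | g x ≠ g' x} ∩ Icc (0:ℝ) 1)) ?_ ?_
  · rintro x ⟨hx, hx0, hx1⟩
    simp only [mem_setOf_eq] at hx
    by_cases hhalf : x < 1/2
    · left
      simp only [mem_preimage, mem_inter_iff, mem_setOf_eq, mem_Icc]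
      refine ⟨?_, by linarith, by linarith⟩
      intro hc
      exact hx (by simp only [gammaFun]; rw [if_pos hhalf, if_pos hhalf, hc])
    · push_neg at hhalf
      right
      simp only [mem_preimage, mem_inter_iff, mem_setOf_eq, mem_Icc]
      refine ⟨?_, by linarith, by linarith⟩
      intro hc
      apply hx
      simp only [gammaFun]
      rw [if_neg (not_lt.mpr hhalf), if_neg (not_lt.mpr hhalf), hc]
  · have h1 : volume ((fun x => 2*x) ⁻¹' ({x | f x ≠ f' x} ∩ Icc (0:ℝ) 1)) = 0 := by
      have h := Real.volume_preimage_mul_left (a := 2) two_ne_zero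
        ({x | f x ≠ f' x} ∩ Icc (0:ℝ) 1)
      rw [hNf, mul_zero] at h
      exact h
    have h2 : volume ((fun x => 2*x - 1) ⁻¹' ({x | g x ≠ g' x} ∩ Icc (0:ℝ) 1)) = 0 := by
      have hcomp : (fun x : ℝ => 2*x - 1) ⁻¹' ({x | g x ≠ g' x} ∩ Icc (0:ℝ) 1)
          = (fun x : ℝ => 2*x) ⁻¹' ((fun y : ℝ => -1 + y) ⁻¹'
              ({x | g x ≠ g' x} ∩ Icc (0:ℝ) 1)) := by
        ext x
        simp only [mem_preimage]
        rw [sub_eq_neg_add]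
      rw [hcomp]
      have htrans : volume ((fun y : ℝ => -1 + y) ⁻¹'
          ({x | g x ≠ g' x} ∩ Icc (0:ℝ) 1)) = 0 := by
        rw [measure_preimage_add volume (-1) _, hNg]
      have h := Real.volume_preimage_mul_left (a := 2) two_ne_zero
        ((fun y : ℝ => -1 + y) ⁻¹' ({x | g x ≠ g' x} ∩ Icc (0:ℝ) 1))
      rw [htrans, mul_zero] at h
      exact h
    exact measure_union_null h1 h2

/-- The `L¹` element given by the indicator of `Ico a b`. -/
noncomputable def eInd (a b : ℝ) : Lp ℝ 1 unitMeasure :=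
  indicatorConstLp 1 (measurableSet_Ico (a := a) (b := b)) (measure_ne_top _ _) (1:ℝ)

lemma eInd_coe (a b : ℝ) :
    ⇑(eInd a b) =ᵐ[unitMeasure] (Ico a b).indicator (fun _ => (1:ℝ)) :=
  indicatorConstLp_coeFn

lemma indicatorConstLp_congr_set {s t : Set ℝ} (h : s = t) (hs : MeasurableSet s)
    (hμs : unitMeasure s ≠ ∞) (ht : MeasurableSet t) (hμt : unitMeasure t ≠ ∞) :
    (indicatorConstLp 1 hs hμs (1:ℝ) : Lp ℝ 1 unitMeasure) = indicatorConstLp 1 ht hμt 1 := by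
  subst h; rfl

lemma eInd_add {a b c : ℝ} (hab : a ≤ b) (hbc : b ≤ c) :
    eInd a c = eInd a b + eInd b c := by
  rw [eInd, eInd, eInd,
    indicatorConstLp_congr_set (Ico_union_Ico_eq_Ico hab hbc).symm measurableSet_Ico
      (measure_ne_top _ _) (measurableSet_Ico.union measurableSet_Ico) (measure_ne_top _ _)]
  exact indicatorConstLp_disjoint_union measurableSet_Ico measurableSet_Ico
    (measure_ne_top _ _) (measure_ne_top _ _) Ico_disjoint_Ico_same (1:ℝ)

lemma norm_eInd_le (a b : ℝ) : ‖eInd a b‖ ≤ 1 := by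
  rw [eInd, norm_indicatorConstLp one_ne_zero ENNReal.one_ne_top]
  have h1 : (unitMeasure (Ico a b)).toReal ≤ 1 := by
    have hle : unitMeasure (Ico a b) ≤ 1 := by
      rw [unitMeasure_apply]
      calc volume (Ico a b ∩ Icc (0:ℝ) 1) ≤ volume (Icc (0:ℝ) 1) :=
            measure_mono inter_subset_right
        _ = 1 := by rw [Real.volume_Icc]; norm_num
    calc (unitMeasure (Ico a b)).toReal ≤ (1 : ℝ≥0∞).toReal :=
          ENNReal.toReal_mono ENNReal.one_ne_top hle
      _ = 1 := by simp
  simpa using (show unitMeasure.real (Ico a b) ≤ 1 from h1)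

lemma indLp_coe {s : Set ℝ} (hs : MeasurableSet s) (hμs : unitMeasure s ≠ ⊤) (c : ℝ) :
    ⇑(indicatorConstLp 1 hs hμs c : Lp ℝ 1 unitMeasure)
      =ᵐ[unitMeasure] s.indicator (fun _ => c) :=
  indicatorConstLp_coeFn

section Uniqueness

variable {K : Lp ℝ 1 unitMeasure →L[ℝ] ℝ}

/-- Main uniqueness engine: a continuous linear functional vanishing on (a.e.) constants `1`
and satisfying the homogeneous juxtaposition identity vanishes identically. -/
theorem K_eq_zero (K : Lp ℝ 1 unitMeasure →L[ℝ] ℝ)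
    (h1 : ∀ h : Lp ℝ 1 unitMeasure, ⇑h =ᵐ[unitMeasure] (fun _ => (1:ℝ)) → K h = 0)
    (hγ : ∀ f g h : Lp ℝ 1 unitMeasure,
      ⇑h =ᵐ[unitMeasure] gammaFun ⇑f ⇑g → K h = (K f + K g) / 2) :
    K = 0 := by
  -- the coercion of `0` is a.e. zero
  have hzero : ⇑(0 : Lp ℝ 1 unitMeasure) =ᵐ[unitMeasure] (fun _ => (0:ℝ)) := Lp.coeFn_zero _ _ _
  -- left-halving
  have hL : ∀ t : ℝ, 0 ≤ t → t ≤ 1 → K (eInd 0 (t/2)) = K (eInd 0 t) / 2 := by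
    intro t ht0 ht1
    have key : ⇑(eInd 0 (t/2)) =ᵐ[unitMeasure]
        gammaFun (⇑(eInd 0 t)) (⇑(0 : Lp ℝ 1 unitMeasure)) := by
      refine (eInd_coe 0 (t/2)).trans ?_
      refine EventuallyEq.trans (EventuallyEq.of_eq ?_)
        (gammaFun_congr (eInd_coe 0 t).symm hzero.symm)
      funext x
      by_cases hx : x < 1/2
      · simp only [gammaFun, if_pos hx, indicator]
        by_cases hmem : x ∈ Ico 0 (t/2)
        · rw [if_pos hmem, if_pos]; exact ⟨by linarith [hmem.1], by linarith [hmem.2]⟩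
        · rw [if_neg hmem, if_neg]
          intro hc
          exact hmem ⟨by linarith [hc.1], by linarith [hc.2]⟩
      · push_neg at hx
        simp only [gammaFun, if_neg (not_lt.mpr hx), indicator]
        rw [if_neg]
        intro hc
        have := hc.2
        have : x < 1/2 := by linarith
        linarith
    rw [hγ (eInd 0 t) 0 (eInd 0 (t/2)) key, map_zero, add_zero]
  -- right-halving
  have hR : ∀ t : ℝ, 0 ≤ t → t ≤ 1 → K (eInd (1/2) ((t+1)/2)) = K (eInd 0 t) / 2 := by
    intro t ht0 ht1
    have key : ⇑(eInd (1/2) ((t+1)/2)) =ᵐ[unitMeasure]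
        gammaFun (⇑(0 : Lp ℝ 1 unitMeasure)) (⇑(eInd 0 t)) := by
      refine (eInd_coe (1/2) ((t+1)/2)).trans ?_
      refine EventuallyEq.trans (EventuallyEq.of_eq ?_)
        (gammaFun_congr hzero.symm (eInd_coe 0 t).symm)
      funext x
      by_cases hx : x < 1/2
      · simp only [gammaFun, if_pos hx, indicator]
        rw [if_neg]
        intro hc
        linarith [hc.1]
      · push_neg at hx
        simp only [gammaFun, if_neg (not_lt.mpr hx), indicator]
        by_cases hmem : x ∈ Ico (1/2 : ℝ) ((t+1)/2)
        · rw [if_pos hmem, if_pos]; exact ⟨by linarith [hmem.1], by linarith [hmem.2]⟩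
        · rw [if_neg hmem, if_neg]
          intro hc
          exact hmem ⟨hx, by linarith [hc.2]⟩
    rw [hγ 0 (eInd 0 t) (eInd (1/2) ((t+1)/2)) key, map_zero, zero_add]
  -- value at the full interval
  have hone : K (eInd 0 1) = 0 := by
    apply h1
    refine (eInd_coe 0 1).trans ?_
    rw [Filter.EventuallyEq, ae_iff]
    refine unitMeasure_null (t := {(1:ℝ)}) ?_ (measure_singleton 1)
    rintro x ⟨hx, hx0, hx1⟩
    simp only [mem_singleton_iff]
    by_contra hne
    have hx1' : x < 1 := lt_of_le_of_ne hx1 hne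
    exact hx (by simp [indicator, mem_Ico, hx0, hx1'])
  have hhalf : K (eInd 0 (1/2)) = 0 := by
    have := hL 1 zero_le_one le_rfl
    rw [hone] at this
    simpa using this
  -- ψ t = 0 for t ∈ [0,1]
  have hbound : ∀ n : ℕ, ∀ t : ℝ, 0 ≤ t → t ≤ 1 → |K (eInd 0 t)| ≤ ‖K‖ / 2 ^ n := by
    intro n
    induction n with
    | zero =>
      intro t ht0 ht1
      simp only [pow_zero, div_one]
      calc |K (eInd 0 t)| ≤ ‖K‖ * ‖eInd 0 t‖ := K.le_opNorm _
        _ ≤ ‖K‖ * 1 := by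
            exact mul_le_mul_of_nonneg_left (norm_eInd_le 0 t) (norm_nonneg K)
        _ = ‖K‖ := mul_one _
    | succ n ih =>
      intro t ht0 ht1
      rcases le_or_gt t (1/2) with hcase | hcase
      · have h2t0 : (0:ℝ) ≤ 2*t := by linarith
        have h2t1 : 2*t ≤ 1 := by linarith
        have heq : K (eInd 0 t) = K (eInd 0 (2*t)) / 2 := by
          have := hL (2*t) h2t0 h2t1
          rw [show (2*t)/2 = t by ring] at this
          exact this
        rw [heq, abs_div, abs_two]
        have := ih (2*t) h2t0 h2t1
        calc |K (eInd 0 (2*t))| / 2 ≤ (‖K‖ / 2 ^ n) / 2 := by linarith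
          _ = ‖K‖ / 2 ^ (n+1) := by ring
      · have hs0 : (0:ℝ) ≤ 2*t - 1 := by linarith
        have hs1 : 2*t - 1 ≤ 1 := by linarith
        have hsplit : eInd 0 t = eInd 0 (1/2) + eInd (1/2) t := by
          exact eInd_add (by norm_num) (by linarith)
        have hR' : K (eInd (1/2) t) = K (eInd 0 (2*t-1)) / 2 := by
          have := hR (2*t-1) hs0 hs1
          rw [show ((2*t-1)+1)/2 = t by ring] at this
          exact this
        have heq : K (eInd 0 t) = K (eInd 0 (2*t-1)) / 2 := by
          rw [hsplit, map_add, hhalf, zero_add, hR']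
        rw [heq, abs_div, abs_two]
        have := ih (2*t-1) hs0 hs1
        calc |K (eInd 0 (2*t-1))| / 2 ≤ (‖K‖ / 2 ^ n) / 2 := by linarith
          _ = ‖K‖ / 2 ^ (n+1) := by ring
  have hpsi : ∀ t : ℝ, 0 ≤ t → t ≤ 1 → K (eInd 0 t) = 0 := by
    intro t ht0 ht1
    have : Tendsto (fun n : ℕ => ‖K‖ / 2 ^ n) atTop (𝓝 0) := by
      simpa using tendsto_const_nhds.div_atTop
        (tendsto_pow_atTop_atTop_of_one_lt (α := ℝ) one_lt_two)
    have habs : |K (eInd 0 t)| ≤ 0 :=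
      ge_of_tendsto this (Eventually.of_forall fun n => hbound n t ht0 ht1)
    have := abs_nonneg (K (eInd 0 t))
    have : |K (eInd 0 t)| = 0 := le_antisymm habs this
    exact abs_eq_zero.mp this
  -- K vanishes on all eInd a b with 0 ≤ a ≤ b ≤ 1
  have hEab : ∀ a b : ℝ, 0 ≤ a → a ≤ b → b ≤ 1 → K (eInd a b) = 0 := by
    intro a b ha hab hb1
    have hsplit : eInd 0 b = eInd 0 a + eInd a b := eInd_add ha hab
    have h0a := hpsi a ha (hab.trans hb1)
    have h0b := hpsi b (ha.trans hab) hb1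
    have : K (eInd 0 b) = K (eInd 0 a) + K (eInd a b) := by rw [hsplit, map_add]
    rw [h0a, h0b] at this
    linarith
  -- K vanishes on eInd a b for arbitrary a b (by clipping to [0,1] a.e.)
  have hEab' : ∀ a b : ℝ, K (eInd a b) = 0 := by
    intro a b
    set a₀ := min (max a 0) 1 with ha₀
    set b₀ := min (max b a₀) 1 with hb₀
    have ha₀0 : 0 ≤ a₀ := le_min (le_max_right a 0) zero_le_one
    have ha₀1 : a₀ ≤ 1 := min_le_right _ _
    have hab₀ : a₀ ≤ b₀ := le_min (le_max_right b a₀) ha₀1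
    have hb₀1 : b₀ ≤ 1 := min_le_right _ _
    have hae : eInd a b = eInd a₀ b₀ := by
      apply Lp.ext
      refine (eInd_coe a b).trans (EventuallyEq.trans ?_ (eInd_coe a₀ b₀).symm)
      rw [Filter.EventuallyEq, ae_iff]
      refine unitMeasure_null (t := {(1:ℝ)}) ?_ (measure_singleton 1)
      rintro x ⟨hx, hx0, hx1⟩
      simp only [mem_singleton_iff]
      by_contra hne
      have hx1' : x < 1 := lt_of_le_of_ne hx1 hne
      apply hx
      have hiff : x ∈ Ico a b ↔ x ∈ Ico a₀ b₀ := by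
        simp only [mem_Ico]
        constructor
        · rintro ⟨h1, h2⟩
          refine ⟨(min_le_left _ _).trans (max_le h1 hx0), lt_min ?_ hx1'⟩
          exact lt_of_lt_of_le h2 (le_max_left b a₀)
        · rintro ⟨h1, h2⟩
          have hxb : x < b := by
            have hmax : x < max b a₀ := lt_of_lt_of_le h2 (min_le_left _ _)
            rcases max_cases b a₀ with ⟨he, _⟩ | ⟨he, hle⟩
            · rwa [he] at hmax
            · rw [he] at hmax; exact absurd h1 (not_le.mpr hmax)
          have hxa : a ≤ x := by
            rcases le_or_gt (max a 0) 1 with hc | hc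
            · have : a₀ = max a 0 := min_eq_left hc
              rw [this] at h1
              exact (le_max_left a 0).trans h1
            · have : a₀ = 1 := min_eq_right hc.le
              rw [this] at h1
              linarith
          exact ⟨hxa, hxb⟩
      by_cases hmem : x ∈ Ico a b
      · rw [indicator_of_mem hmem, indicator_of_mem (hiff.mp hmem)]
      · rw [indicator_of_notMem hmem, indicator_of_notMem (fun hc => hmem (hiff.mpr hc))]
    rw [hae]
    exact hEab a₀ b₀ ha₀0 hab₀ hb₀1
  -- K vanishes on indicators of all measurable sets
  have hind : ∀ s : Set ℝ, MeasurableSet s →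
      ∀ (hs : MeasurableSet s), K (indicatorConstLp 1 hs (measure_ne_top _ _) (1:ℝ)) = 0 := by
    have huniv : ∀ (hs : MeasurableSet (univ : Set ℝ)),
        K (indicatorConstLp 1 hs (measure_ne_top _ _) (1:ℝ)) = 0 := by
      intro hs
      apply h1
      refine indicatorConstLp_coeFn.trans ?_
      rw [indicator_univ]
    refine MeasurableSpace.induction_on_inter
      (C := fun s _ => ∀ (hs : MeasurableSet s),
        K (indicatorConstLp 1 hs (measure_ne_top _ _) (1:ℝ)) = 0)
      (BorelSpace.measurable_eq.trans (borel_eq_generateFrom_Ico ℝ))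
      (isPiSystem_Ico (id : ℝ → ℝ) id) ?_ ?_ ?_ ?_
    · intro hs
      rw [indicatorConstLp_congr_set rfl hs (measure_ne_top _ _) MeasurableSet.empty
        (measure_ne_top _ _), indicatorConstLp_empty, map_zero]
    · rintro t ⟨a, b, hab, rfl⟩ ht
      exact hEab' a b
    · intro t htm iht hs
      have hsub : (indicatorConstLp 1 hs (measure_ne_top _ _) (1:ℝ) : Lp ℝ 1 unitMeasure)
          = indicatorConstLp 1 MeasurableSet.univ (measure_ne_top _ _) 1
            - indicatorConstLp 1 htm (measure_ne_top _ _) 1 := by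
        apply Lp.ext
        filter_upwards [indLp_coe hs (measure_ne_top _ _) 1,
          Lp.coeFn_sub (indicatorConstLp 1 MeasurableSet.univ (measure_ne_top _ _) (1:ℝ))
            (indicatorConstLp 1 htm (measure_ne_top _ _) (1:ℝ)),
          indLp_coe MeasurableSet.univ (measure_ne_top _ _) (1:ℝ),
          indLp_coe htm (measure_ne_top _ _) (1:ℝ)] with x hxc hxs hxu hxt
        rw [hxc, hxs, Pi.sub_apply, hxu, hxt]
        by_cases hx : x ∈ t <;> simp [indicator, hx]
      rw [hsub, map_sub, huniv MeasurableSet.univ, iht htm, sub_zero]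
    · intro f hdisj hmeas ihf hU
      -- partial unions
      set A : ℕ → Set ℝ := fun n => ⋃ i ∈ Finset.range n, f i with hA
      have hAm : ∀ n, MeasurableSet (A n) := fun n =>
        Finset.measurableSet_biUnion _ (fun i _ => hmeas i)
      have hAmono : Monotone A := fun m n hmn =>
        Set.biUnion_subset_biUnion_left (Finset.range_subset_range.mpr hmn)
      have hAsub : ∀ n, A n ⊆ ⋃ i, f i := fun n =>
        Set.iUnion₂_subset fun i _ => Set.subset_iUnion f i
      have hAU : ⋃ n, A n = ⋃ i, f i := by
        apply Set.Subset.antisymm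
        · exact Set.iUnion_subset hAsub
        · refine Set.iUnion_subset fun i => ?_
          refine Set.subset_iUnion_of_subset (i+1) ?_
          exact Set.subset_biUnion_of_mem (Finset.self_mem_range_succ i)
      -- K vanishes on partial unions
      have hKA : ∀ n, K (indicatorConstLp 1 (hAm n) (measure_ne_top _ _) (1:ℝ)) = 0 := by
        intro n
        induction n with
        | zero =>
          rw [indicatorConstLp_congr_set (by simp [hA]) (hAm 0) (measure_ne_top _ _)
            MeasurableSet.empty (measure_ne_top _ _), indicatorConstLp_empty, map_zero]
        | succ n ihn =>
          have hAn1 : A (n+1) = A n ∪ f n := by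
            ext x
            simp only [hA, Finset.mem_range, mem_iUnion, mem_union, exists_prop]
            constructor
            · rintro ⟨i, hi, hx⟩
              rcases Nat.lt_succ_iff_lt_or_eq.mp hi with h | h
              · exact Or.inl ⟨i, h, hx⟩
              · subst h; exact Or.inr hx
            · rintro (⟨i, hi, hx⟩ | hx)
              · exact ⟨i, Nat.lt_succ_of_lt hi, hx⟩
              · exact ⟨n, Nat.lt_succ_self n, hx⟩
          have hdisj' : Disjoint (A n) (f n) := by
            refine Set.disjoint_iUnion₂_left.mpr fun i hi => ?_
            exact hdisj (ne_of_lt (Finset.mem_range.mp hi))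
          rw [indicatorConstLp_congr_set hAn1 (hAm (n+1)) (measure_ne_top _ _)
            ((hAm n).union (hmeas n)) (measure_ne_top _ _),
            indicatorConstLp_disjoint_union (hAm n) (hmeas n) (measure_ne_top _ _)
              (measure_ne_top _ _) hdisj' (1:ℝ), map_add, ihn, ihf n (hmeas n), add_zero]
      -- convergence in L¹
      set U := ⋃ i, f i with hUdef
      have hUm : MeasurableSet U := MeasurableSet.iUnion hmeas
      have hdiff : ∀ n, (indicatorConstLp 1 hUm (measure_ne_top _ _) (1:ℝ) :
            Lp ℝ 1 unitMeasure) - indicatorConstLp 1 (hAm n) (measure_ne_top _ _) 1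
          = indicatorConstLp 1 (hUm.diff (hAm n)) (measure_ne_top _ _) 1 := by
        intro n
        have hU' : U = A n ∪ (U \ A n) := by
          rw [Set.union_diff_cancel (hAsub n)]
        rw [indicatorConstLp_congr_set hU' hUm (measure_ne_top _ _)
          ((hAm n).union (hUm.diff (hAm n))) (measure_ne_top _ _),
          indicatorConstLp_disjoint_union (hAm n) (hUm.diff (hAm n)) (measure_ne_top _ _)
            (measure_ne_top _ _) Set.disjoint_sdiff_right (1:ℝ)]
        abel
      have hmeastend : Tendsto (fun n => unitMeasure (U \ A n)) atTop (𝓝 0) := by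
        have h1 : Tendsto (fun n => unitMeasure (A n)) atTop (𝓝 (unitMeasure U)) := by
          have h := tendsto_measure_iUnion_atTop (μ := unitMeasure) hAmono
          rwa [hAU] at h
        have h2 : ∀ n, unitMeasure (U \ A n) = unitMeasure U - unitMeasure (A n) := by
          intro n
          exact measure_diff (hAsub n) (hAm n).nullMeasurableSet (measure_ne_top _ _)
        simp_rw [h2]
        have := ENNReal.Tendsto.sub (tendsto_const_nhds (x := unitMeasure U)) h1
          (Or.inl (measure_ne_top _ _))
        simpa using this
      have hnormtend : Tendsto (fun n =>
          (indicatorConstLp 1 (hAm n) (measure_ne_top _ _) (1:ℝ) : Lp ℝ 1 unitMeasure))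
          atTop (𝓝 (indicatorConstLp 1 hUm (measure_ne_top _ _) 1)) := by
        rw [tendsto_iff_norm_sub_tendsto_zero]
        have heq : ∀ n, ‖(indicatorConstLp 1 (hAm n) (measure_ne_top _ _) (1:ℝ) :
            Lp ℝ 1 unitMeasure) - indicatorConstLp 1 hUm (measure_ne_top _ _) 1‖
            = (unitMeasure (U \ A n)).toReal := by
          intro n
          rw [norm_sub_rev, hdiff n, norm_indicatorConstLp one_ne_zero ENNReal.one_ne_top]
          norm_num; rfl
        simp_rw [heq]
        have := (ENNReal.tendsto_toReal ENNReal.zero_ne_top).comp hmeastend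
        exact this
      have hKU := ((K.continuous.tendsto _).comp hnormtend)
      simp_rw [Function.comp_def, hKA] at hKU
      exact tendsto_nhds_unique hKU tendsto_const_nhds
  -- conclude by Lp.induction
  ext f
  show K f = 0
  induction f using Lp.induction (hp_ne_top := ENNReal.one_ne_top) with
  | @indicatorConst c s hs hμs =>
    rw [Lp.simpleFunc.coe_indicatorConst]
    have hsmul : (indicatorConstLp 1 hs hμs.ne c : Lp ℝ 1 unitMeasure)
        = c • indicatorConstLp 1 hs hμs.ne (1:ℝ) := by
      apply Lp.ext
      filter_upwards [indLp_coe hs hμs.ne c,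
        Lp.coeFn_smul c (indicatorConstLp 1 hs hμs.ne (1:ℝ) : Lp ℝ 1 unitMeasure),
        indLp_coe hs hμs.ne (1:ℝ)] with x hxc hxs hx1
      rw [hxc, hxs, Pi.smul_apply, hx1]
      by_cases hx : x ∈ s <;> simp [indicator, hx]
    rw [hsmul, K.map_smul, hind s hs hs, smul_zero]
  | @add f g hf hg hdisj ihf ihg =>
    rw [map_add, ihf, ihg, add_zero]
  | isClosed =>
    exact IsClosed.preimage K.continuous isClosed_singleton

end Uniqueness

lemma integral_gamma (f g : ℝ → ℝ)
    (hγ : Integrable (gammaFun f g) unitMeasure) :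
    ∫ x, gammaFun f g x ∂unitMeasure
      = (∫ x, f x ∂unitMeasure + ∫ x, g x ∂unitMeasure) / 2 := by
  have h01 : (0:ℝ) ≤ 1 := zero_le_one
  have hIcc : ∀ φ : ℝ → ℝ, ∫ x, φ x ∂unitMeasure = ∫ x in (0:ℝ)..1, φ x := by
    intro φ
    rw [intervalIntegral.integral_of_le h01]
    show ∫ x in Icc (0:ℝ) 1, φ x = ∫ x in Ioc (0:ℝ) 1, φ x
    exact integral_Icc_eq_integral_Ioc
  have hγIcc : IntegrableOn (gammaFun f g) (Icc (0:ℝ) 1) volume := hγ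
  have hii1 : IntervalIntegrable (gammaFun f g) volume 0 (1/2) := by
    rw [intervalIntegrable_iff_integrableOn_Ioc_of_le (by norm_num)]
    exact hγIcc.mono_set (fun x hx => ⟨le_of_lt hx.1, by linarith [hx.2]⟩)
  have hii2 : IntervalIntegrable (gammaFun f g) volume (1/2) 1 := by
    rw [intervalIntegrable_iff_integrableOn_Ioc_of_le (by norm_num)]
    exact hγIcc.mono_set (fun x hx => ⟨by linarith [hx.1], hx.2⟩)
  have hsplit := intervalIntegral.integral_add_adjacent_intervals hii1 hii2
  have hleft : ∫ x in (0:ℝ)..(1/2), gammaFun f g x = ∫ x in (0:ℝ)..(1/2), f (2*x) := by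
    apply intervalIntegral.integral_congr_ae
    have hne : ∀ᵐ (x:ℝ) ∂volume, x ≠ 1/2 := by
      rw [ae_iff]
      have : {x : ℝ | ¬x ≠ 1/2} = {(1/2 : ℝ)} := by ext x; simp
      rw [this]
      exact measure_singleton _
    filter_upwards [hne] with x hx hmem
    rw [uIoc_of_le (by norm_num)] at hmem
    have hlt : x < 1/2 := lt_of_le_of_ne hmem.2 hx
    simp only [gammaFun]
    rw [if_pos hlt]
  have hcl : ∫ x in (0:ℝ)..(1/2), f (2*x) = (2:ℝ)⁻¹ • ∫ x in (0:ℝ)..1, f x := by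
    have h := intervalIntegral.integral_comp_mul_left (a := (0:ℝ)) (b := 1/2) f two_ne_zero
    norm_num at h
    convert h using 2 <;> norm_num
  have hright : ∫ x in (1/2 : ℝ)..1, gammaFun f g x = ∫ x in (1/2:ℝ)..1, g (2*x - 1) := by
    apply intervalIntegral.integral_congr
    intro x hx
    rw [uIcc_of_le (by norm_num)] at hx
    have hge : ¬ x < 1/2 := not_lt.mpr hx.1
    simp only [gammaFun]
    rw [if_neg hge]
  have hcr : ∫ x in (1/2:ℝ)..1, g (2*x - 1) = (2:ℝ)⁻¹ • ∫ x in (0:ℝ)..1, g x := by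
    have h := intervalIntegral.integral_comp_mul_sub (a := (1/2:ℝ)) (b := 1) g two_ne_zero 1
    norm_num at h
    convert h using 2 <;> norm_num
  rw [hIcc (gammaFun f g), hIcc f, hIcc g, ← hsplit, hleft, hright, hcl, hcr]
  simp only [smul_eq_mul]
  ring

/-- the Lebesgue integral `I(f) = ∫_{[0,1]} f` is the unique continuous
linear functional on `L¹([0,1];ℝ)` with `I(1) = 1` and `I(γ(f,g)) = (I(f) + I(g))/2`. -/
theorem lebesgue_integral_unique_functional :
    ∃ I : Lp ℝ 1 unitMeasure →L[ℝ] ℝ,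
      (∀ f : Lp ℝ 1 unitMeasure, I f = ∫ x, f x ∂unitMeasure) ∧
      (∀ one : Lp ℝ 1 unitMeasure,
        ⇑one =ᵐ[unitMeasure] (fun _ => (1 : ℝ)) → I one = 1) ∧
      (∀ f g h : Lp ℝ 1 unitMeasure,
        ⇑h =ᵐ[unitMeasure] gammaFun ⇑f ⇑g → I h = (I f + I g) / 2) ∧
      (∀ J : Lp ℝ 1 unitMeasure →L[ℝ] ℝ,
        ((∀ one : Lp ℝ 1 unitMeasure,
            ⇑one =ᵐ[unitMeasure] (fun _ => (1 : ℝ)) → J one = 1) ∧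
          (∀ f g h : Lp ℝ 1 unitMeasure,
            ⇑h =ᵐ[unitMeasure] gammaFun ⇑f ⇑g → J h = (J f + J g) / 2)) →
          J = I) := by
  classical
  set I : Lp ℝ 1 unitMeasure →L[ℝ] ℝ := L1.integralCLM with hIdef
  have hint : ∀ f : Lp ℝ 1 unitMeasure, I f = ∫ x, f x ∂unitMeasure := by
    intro f
    rw [hIdef, ← L1.integral_eq, L1.integral_eq_integral]
  have honeI : ∀ one : Lp ℝ 1 unitMeasure,
      ⇑one =ᵐ[unitMeasure] (fun _ => (1:ℝ)) → I one = 1 := by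
    intro one h
    rw [hint, integral_congr_ae h, integral_const, smul_eq_mul, mul_one, measureReal_def, unitMeasure_apply]
    simp [Real.volume_Icc]
  have hgamI : ∀ f g h : Lp ℝ 1 unitMeasure,
      ⇑h =ᵐ[unitMeasure] gammaFun ⇑f ⇑g → I h = (I f + I g) / 2 := by
    intro f g h hae
    rw [hint h, hint f, hint g, integral_congr_ae hae]
    exact integral_gamma _ _ ((L1.integrable_coeFn h).congr hae)
  refine ⟨I, hint, honeI, hgamI, ?_⟩
  rintro J ⟨hJ1, hJγ⟩
  have hK : J - I = 0 := by
    apply K_eq_zero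
    · intro h hh
      rw [ContinuousLinearMap.sub_apply, hJ1 h hh, honeI h hh, sub_self]
    · intro f g h hh
      rw [ContinuousLinearMap.sub_apply, ContinuousLinearMap.sub_apply,
        ContinuousLinearMap.sub_apply, hJγ f g h hh, hgamI f g h hh]
      ring
  rwa [sub_eq_zero] at hK
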